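/- Let E be a finite-dimensional real inner product space and let K ⊆ E be a nonempty compact convex set with support function s_K(x) = sup_{y∈K}⟨x,y⟩. Suppose e is a unit vector at which the supremum of s_K over the unit sphere of E is attained. Then the point s_K(e)·e belongs to K, and consequently s_K(u) ≥ s_K(e)·⟨u,e⟩ for every vector u with |u| = 1. -/

import Mathlib

open scoped RealInnerProductSpace

noncomputable section

/-- The support function of a subset `K` of a real inner product space. -/
def supportFn {E : Type*} [NormedAddCommGroup E] [InnerProductSpace ℝ E]
    (K : Set E) (x : E) : ℝ :=
  sSup ((fun y => ⟪x, y⟫) '' K)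

/-- if `K` is a nonempty compact convex subset of a
finite-dimensional real inner product space and the supremum of its support function
over the unit sphere is attained at the unit vector `e`, then `s_K(e) • e ∈ K`, and
consequently `s_K(u) ≥ s_K(e) ⟨u, e⟩` for every unit vector `u`. -/
theorem stmt16 {E : Type*} [NormedAddCommGroup E] [InnerProductSpace ℝ E]
    [FiniteDimensional ℝ E] (K : Set E) (hne : K.Nonempty) (hcpt : IsCompact K)
    (hconv : Convex ℝ K) (e : E) (he : ‖e‖ = 1)
    (hmax : ∀ u : E, ‖u‖ = 1 → supportFn K u ≤ supportFn K e) :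
    supportFn K e • e ∈ K ∧
    ∀ u : E, ‖u‖ = 1 → supportFn K e * ⟪u, e⟫ ≤ supportFn K u := by
  have hle : ∀ (x z : E), z ∈ K → ⟪x, z⟫ ≤ supportFn K x := by
    intro x z hz
    have hbdd : BddAbove ((fun y => ⟪x, y⟫) '' K) :=
      (hcpt.image (Continuous.inner continuous_const continuous_id)).bddAbove
    exact le_csSup hbdd ⟨z, hz, rfl⟩
  obtain ⟨y, hyK, hy⟩ := hcpt.exists_isMaxOn (f := fun z => (⟪e, z⟫ : ℝ)) hne
    (Continuous.inner continuous_const continuous_id).continuousOn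
  have hGreat : IsGreatest ((fun z => ⟪e, z⟫) '' K) ⟪e, y⟫ :=
    ⟨⟨y, hyK, rfl⟩, by rintro _ ⟨z, hz, rfl⟩; exact hy hz⟩
  have se : supportFn K e = ⟪e, y⟫ := hGreat.csSup_eq
  have hmem : supportFn K e • e = y := by
    rcases eq_or_ne y 0 with h0 | h0
    · simp [se, h0]
    · set u : E := ‖y‖⁻¹ • y with hu
      have hny : (0:ℝ) < ‖y‖ := norm_pos_iff.mpr h0
      have hun : ‖u‖ = 1 := by
        rw [hu, norm_smul, norm_inv, norm_norm, inv_mul_cancel₀ hny.ne']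
      have h1 : ‖y‖ ≤ supportFn K u := by
        have := hle u y hyK
        rw [hu] at this
        rw [real_inner_smul_left, real_inner_self_eq_norm_sq] at this
        calc ‖y‖ = ‖y‖⁻¹ * ‖y‖ ^ 2 := by field_simp
          _ ≤ supportFn K u := this
      have h2 : supportFn K e ≤ ‖y‖ := by
        rw [se]
        calc ⟪e, y⟫ ≤ ‖e‖ * ‖y‖ := real_inner_le_norm e y
          _ = ‖y‖ := by rw [he, one_mul]
      have heq : ⟪e, y⟫ = ‖e‖ * ‖y‖ := by
        rw [he, one_mul]
        linarith [hmax u hun, se, h1, h2]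
      have := inner_eq_norm_mul_iff_real.mp heq
      rw [he, one_smul] at this
      rw [se, heq, he, one_mul, this]
  refine ⟨hmem ▸ hyK, fun u hun => ?_⟩
  have := hle u (supportFn K e • e) (hmem ▸ hyK)
  rwa [real_inner_smul_right] at this

end
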